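/- arXiv:2403.15071 — 7 statements merged into one kernel-verified Lean document; each statement's English description precedes it below -/
import Mathlib

section
/- Let ê₁, ê₂ : ℝ³ → ℝ³ be differentiable vector fields that are pointwise orthonormal, i.e. ê₁·ê₁ = ê₂·ê₂ = 1 and ê₁·ê₂ = 0 everywhere. For (r, θ) ∈ ℝ³ × ℝ define τ̂(r, θ) := −ê₁(r) sin θ − ê₂(r) cos θ and ρ̂(r, θ) := ê₁(r) cos θ − ê₂(r) sin θ. Then for every (r, θ): (i) ∂/∂θ [(∇τ̂)ρ̂](r, θ) = 0, i.e. the vector field (∇τ̂)ρ̂ is independent of the gyro-phase θ; and (ii) (∇τ̂)ρ̂ (r, θ) = ((∇ê₁)ê₂)(r). -/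
open Matrix

/-- The vector `(∇S)v` at a point `r`, with `(∇S)_{ij} = ∂S_j/∂r_i`, i.e.
`((∇S)v)_i = ∑_j (∂S_j/∂r_i) v_j`. -/
noncomputable def gradVec (S : (Fin 3 → ℝ) → Fin 3 → ℝ) (r v : Fin 3 → ℝ) : Fin 3 → ℝ :=
  fun i => ∑ j, fderiv ℝ S r (Pi.single i 1) j * v j

lemma dot_fderiv_eq_zero (f g : (Fin 3 → ℝ) → Fin 3 → ℝ)
    (hf : Differentiable ℝ f) (hg : Differentiable ℝ g) (c : ℝ)
    (h : ∀ r, f r ⬝ᵥ g r = c) (r v : Fin 3 → ℝ) :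
    ∑ j, (fderiv ℝ f r v j * g r j + f r j * fderiv ℝ g r v j) = 0 := by
  have hfj : ∀ j : Fin 3, HasFDerivAt (fun r => f r j)
      ((ContinuousLinearMap.proj j).comp (fderiv ℝ f r)) r :=
    fun j => (ContinuousLinearMap.proj j : (Fin 3 → ℝ) →L[ℝ] ℝ).hasFDerivAt.comp r (hf r).hasFDerivAt
  have hgj : ∀ j : Fin 3, HasFDerivAt (fun r => g r j)
      ((ContinuousLinearMap.proj j).comp (fderiv ℝ g r)) r :=
    fun j => (ContinuousLinearMap.proj j : (Fin 3 → ℝ) →L[ℝ] ℝ).hasFDerivAt.comp r (hg r).hasFDerivAt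
  have hsum : HasFDerivAt (fun r => ∑ j, f r j * g r j)
      (∑ j, (f r j • ((ContinuousLinearMap.proj j).comp (fderiv ℝ g r)) +
             g r j • ((ContinuousLinearMap.proj j).comp (fderiv ℝ f r)))) r :=
    HasFDerivAt.fun_sum fun j _ => (hfj j).mul (hgj j)
  have hconst : HasFDerivAt (fun r => ∑ j, f r j * g r j) (0 : (Fin 3 → ℝ) →L[ℝ] ℝ) r := by
    have he : (fun r => ∑ j, f r j * g r j) = fun _ => c := by
      funext r; simpa [dotProduct] using h r
    rw [he]; exact hasFDerivAt_const _ _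
  have huniq := hsum.unique hconst
  have hv := congrArg (fun L : (Fin 3 → ℝ) →L[ℝ] ℝ => L v) huniq
  simp only [ContinuousLinearMap.coe_sum', Finset.sum_apply, ContinuousLinearMap.add_apply,
    ContinuousLinearMap.coe_smul', Pi.smul_apply, ContinuousLinearMap.coe_comp',
    Function.comp_apply, ContinuousLinearMap.proj_apply, smul_eq_mul,
    ContinuousLinearMap.zero_apply] at hv
  calc ∑ j, (fderiv ℝ f r v j * g r j + f r j * fderiv ℝ g r v j)
      = ∑ j, (f r j * fderiv ℝ g r v j + g r j * fderiv ℝ f r v j) := by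
        apply Finset.sum_congr rfl; intros; ring
    _ = 0 := hv

/-- for pointwise orthonormal differentiable fields `ê₁, ê₂`, the vector
field `(∇τ̂)ρ̂` is gyro-phase independent and equals `(∇ê₁)ê₂`. -/
theorem gradVec_tau_rho_gyrophase_independent
    (e1 e2 : (Fin 3 → ℝ) → Fin 3 → ℝ)
    (hd1 : Differentiable ℝ e1) (hd2 : Differentiable ℝ e2)
    (h11 : ∀ r, e1 r ⬝ᵥ e1 r = 1) (h22 : ∀ r, e2 r ⬝ᵥ e2 r = 1)
    (h12 : ∀ r, e1 r ⬝ᵥ e2 r = 0)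
    (τ ρ : (Fin 3 → ℝ) → ℝ → Fin 3 → ℝ)
    (hτ : ∀ r θ, τ r θ = (-Real.sin θ) • e1 r - Real.cos θ • e2 r)
    (hρ : ∀ r θ, ρ r θ = Real.cos θ • e1 r - Real.sin θ • e2 r) :
    ∀ (r : Fin 3 → ℝ) (θ : ℝ),
      deriv (fun θ' => gradVec (fun r' => τ r' θ') r (ρ r θ')) θ = 0 ∧
      gradVec (fun r' => τ r' θ) r (ρ r θ) = gradVec e1 r (e2 r) := by
  intro r θ
  have key : ∀ θ' : ℝ, gradVec (fun r' => τ r' θ') r (ρ r θ') = gradVec e1 r (e2 r) := by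
    intro θ'
    funext i
    set s := Real.sin θ' with hs
    set c := Real.cos θ' with hc'
    have hfun : (fun r' => τ r' θ') = fun r' => (-s) • e1 r' - c • e2 r' :=
      funext fun r' => hτ r' θ'
    have hD : fderiv ℝ (fun r' => τ r' θ') r
        = (-s) • fderiv ℝ e1 r - c • fderiv ℝ e2 r := by
      rw [hfun, fderiv_fun_sub (f := fun r' => (-s) • e1 r') (g := fun r' => c • e2 r')
          ((hd1 r).const_smul (-s)) ((hd2 r).const_smul c),
        fderiv_fun_const_smul (hd1 r), fderiv_fun_const_smul (hd2 r)]
    set v : Fin 3 → ℝ := Pi.single i 1 with hv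
    have ha : ∑ j, fderiv ℝ e1 r v j * e1 r j = 0 := by
      have h := dot_fderiv_eq_zero e1 e1 hd1 hd1 1 h11 r v
      have h2 : ∑ j, (fderiv ℝ e1 r v j * e1 r j + e1 r j * fderiv ℝ e1 r v j)
          = 2 * ∑ j, fderiv ℝ e1 r v j * e1 r j := by
        rw [Finset.mul_sum]; apply Finset.sum_congr rfl; intros; ring
      rw [h2] at h; linarith
    have hb : ∑ j, fderiv ℝ e2 r v j * e2 r j = 0 := by
      have h := dot_fderiv_eq_zero e2 e2 hd2 hd2 1 h22 r v
      have h2 : ∑ j, (fderiv ℝ e2 r v j * e2 r j + e2 r j * fderiv ℝ e2 r v j)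
          = 2 * ∑ j, fderiv ℝ e2 r v j * e2 r j := by
        rw [Finset.mul_sum]; apply Finset.sum_congr rfl; intros; ring
      rw [h2] at h; linarith
    have hcx := dot_fderiv_eq_zero e1 e2 hd1 hd2 0 h12 r v
    have hp : s ^ 2 + c ^ 2 = 1 := Real.sin_sq_add_cos_sq θ'
    show (∑ j, fderiv ℝ (fun r' => τ r' θ') r v j * ρ r θ' j)
        = ∑ j, fderiv ℝ e1 r v j * e2 r j
    rw [hD]
    simp only [hρ, ContinuousLinearMap.coe_sub', Pi.sub_apply,
      ContinuousLinearMap.coe_smul', Pi.smul_apply, smul_eq_mul, Pi.neg_apply, neg_mul]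
    rw [Fin.sum_univ_three] at ha hb hcx ⊢
    rw [Fin.sum_univ_three]
    linear_combination (-s*c) * ha + (c*s) * hb + (-c*c) * hcx +
      (fderiv ℝ e1 r v 0 * e2 r 0 + fderiv ℝ e1 r v 1 * e2 r 1 +
       fderiv ℝ e1 r v 2 * e2 r 2) * hp
  refine ⟨?_, key θ⟩
  have : (fun θ' => gradVec (fun r' => τ r' θ') r (ρ r θ')) = fun _ => gradVec e1 r (e2 r) :=
    funext key
  rw [this]; exact deriv_const _ _
end

section
/- Let b̂₀, B, w ∈ ℝ³ and m, q, B₀ ∈ ℝ with m ≠ 0, q ≠ 0, B₀ ≠ 0, and suppose B∥ := B·b̂₀ ≠ 0. Define the 6×6 block matrix (blocks of sizes 3,1,1,1) W := [[q[B], −m b̂₀, (m/q)w, 0₃], [m b̂₀ᵀ, 0, 0, 0], [−(m/q)wᵀ, 0, 0, m/q], [0₃ᵀ, 0, −m/q, 0]] and J := [[−[B₀ b̂₀]/(q B₀ B∥), B/(m B∥), 0₃, −(w × b̂₀)/(q B∥)], [−Bᵀ/(m B∥), 0, 0, −(B·w)/(m B∥)], [0₃ᵀ, 0, 0, −q/m],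 [(w × b̂₀)ᵀ/(q B∥), (B·w)/(m B∥), q/m, 0]]. Then W · J = I₆, i.e. J is the inverse of the guiding-centre Lagrange matrix W. -/
open Matrix

/-- The matrix `[X]` with `[X]v = v × X`. -/
def crossMat (X : Fin 3 → ℝ) : Matrix (Fin 3) (Fin 3) ℝ :=
  Matrix.of fun i j => crossProduct (Pi.single j 1) X i

/-- The 6×6 guiding-centre Lagrange matrix `W` (blocks of sizes 3,1,1,1, the second
block index `0,1,2` standing for the `u∥, μ, θ` rows/columns). -/
noncomputable def WLagrange (m q : ℝ) (b0 B w : Fin 3 → ℝ) :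
    Matrix (Fin 3 ⊕ Fin 3) (Fin 3 ⊕ Fin 3) ℝ :=
  Matrix.fromBlocks
    (q • crossMat B)
    (Matrix.of fun i j => ![-m * b0 i, m / q * w i, 0] j)
    (Matrix.of fun i j => ![m * b0 j, -(m / q) * w j, 0] i)
    !![0, 0, 0; 0, 0, m / q; 0, -(m / q), 0]

/-- The claimed inverse (Poisson matrix) `J`. -/
noncomputable def JPoisson (m q B0 : ℝ) (b0 B w : Fin 3 → ℝ) :
    Matrix (Fin 3 ⊕ Fin 3) (Fin 3 ⊕ Fin 3) ℝ :=
  Matrix.fromBlocks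
    ((-(1 / (q * B0 * (B ⬝ᵥ b0)))) • crossMat (B0 • b0))
    (Matrix.of fun i j => ![B i / (m * (B ⬝ᵥ b0)), 0,
        -(crossProduct w b0 i) / (q * (B ⬝ᵥ b0))] j)
    (Matrix.of fun i j => ![-(B j) / (m * (B ⬝ᵥ b0)), 0,
        crossProduct w b0 j / (q * (B ⬝ᵥ b0))] i)
    !![0, 0, -(B ⬝ᵥ w) / (m * (B ⬝ᵥ b0));
       0, 0, -(q / m);
       (B ⬝ᵥ w) / (m * (B ⬝ᵥ b0)), q / m, 0]

set_option maxHeartbeats 2000000 in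
/-- `J` is the inverse of the guiding-centre Lagrange matrix `W`. -/
theorem lagrange_matrix_inverse (m q B0 : ℝ) (hm : m ≠ 0) (hq : q ≠ 0) (hB0 : B0 ≠ 0)
    (b0 B w : Fin 3 → ℝ) (hBpar : B ⬝ᵥ b0 ≠ 0) :
    WLagrange m q b0 B w * JPoisson m q B0 b0 B w = 1 := by
  have hpar := hBpar
  rw [show B ⬝ᵥ b0 = B 0 * b0 0 + B 1 * b0 1 + B 2 * b0 2 by
    simp [dotProduct, Fin.sum_univ_three]] at hpar
  ext i j
  rcases i with i | i <;> rcases j with j | j <;>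
    fin_cases i <;> fin_cases j <;>
  · simp only [WLagrange, JPoisson, crossMat, Matrix.mul_apply, Matrix.fromBlocks_apply₁₁,
      Matrix.fromBlocks_apply₁₂, Matrix.fromBlocks_apply₂₁, Matrix.fromBlocks_apply₂₂,
      Matrix.one_apply, Fintype.sum_sum_type, Fin.sum_univ_three, dotProduct,
      cross_apply, Matrix.of_apply, Matrix.smul_apply, smul_eq_mul, Pi.smul_apply,
      Matrix.cons_val_zero, Matrix.cons_val_one, Matrix.head_cons, Matrix.cons_val_two,
      Matrix.tail_cons, Matrix.cons_val', Matrix.empty_val', Matrix.cons_val_fin_one,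
      Pi.single_eq_same, Pi.single_eq_of_ne, ne_eq, Fin.isValue]
    simp [Pi.single_apply, Matrix.vecHead, Matrix.vecTail]
    try field_simp
    try ring
    try (ring_nf at hpar ⊢; field_simp; ring)
    try (rw [← add_mul, ← add_mul]; exact mul_inv_cancel₀ (by rwa [show b0 0 * B 0 = B 0 * b0 0 by ring]))
end

section
/- For all vectors B, b̂₀ ∈ ℝ³ and all real numbers m, q, the 4×4 block matrix [[q[B], −m b̂₀], [m b̂₀ᵀ, 0]] (with 3×3 top-left block, 3×1 and 1×3 off-diagonal blocks, and scalar bottom-right entry) has determinant q² m² (B·b̂₀)². -/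
open Matrix

/-- `det [[q[B], −m b̂₀], [m b̂₀ᵀ, 0]] = q² m² (B·b̂₀)²`. -/
theorem det_W11_block (B b0 : Fin 3 → ℝ) (m q : ℝ) :
    (Matrix.fromBlocks (q • crossMat B)
      (Matrix.of fun i (_ : Fin 1) => -m * b0 i)
      (Matrix.of fun (_ : Fin 1) j => m * b0 j)
      (0 : Matrix (Fin 1) (Fin 1) ℝ)).det
    = q ^ 2 * m ^ 2 * (B ⬝ᵥ b0) ^ 2 := by
  have h : (Matrix.fromBlocks (q • crossMat B)
      (Matrix.of fun i (_ : Fin 1) => -m * b0 i)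
      (Matrix.of fun (_ : Fin 1) j => m * b0 j)
      (0 : Matrix (Fin 1) (Fin 1) ℝ))
      = (Matrix.reindex finSumFinEquiv.symm finSumFinEquiv.symm)
        !![0, q * B 2, -(q * B 1), -m * b0 0;
           -(q * B 2), 0, q * B 0, -m * b0 1;
           q * B 1, -(q * B 0), 0, -m * b0 2;
           m * b0 0, m * b0 1, m * b0 2, 0] := by
    ext i j
    rcases i with i | i <;> rcases j with j | j <;>
      fin_cases i <;> fin_cases j <;>
      simp [crossMat, crossProduct, Pi.single, Function.update, finSumFinEquiv] <;>
      rfl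
  rw [h, Matrix.det_reindex_self, Matrix.det_succ_row_zero]
  have e : (Fin.castSucc (2 : Fin 3)) = (2 : Fin 4) := rfl
  simp [e, Fin.sum_univ_succ, Matrix.det_fin_three, Fin.succAbove,
    dotProduct, Fin.sum_univ_three]
  ring
end

section
/- Let (b̂₀, ê₁, ê₂) be an orthonormal basis of ℝ³ with b̂₀ = ê₁ × ê₂, define τ̂(θ) := −ê₁ sin θ − ê₂ cos θ and ρ̂(θ) := ê₁ cos θ − ê₂ sin θ, and let S : ℝ³ → ℝ³ be continuously differentiable. Then for every R ∈ ℝ³ and ρ > 0, (1/2π)∫₀^{2π} S(R + ρ ρ̂(θ)) · τ̂(θ) dθ = −(ρ/2π) ∫₀^1 ∫₀^{2π} ā (∇×S)(R + ā ρ ρ̂(θ)) · b̂₀ dθ dā; i.e. the gyro-average of the tangential component of S equals minus ρ/2 times the disc average of the parallel component of the curl of S. -/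
open Matrix Real

/-- The partial derivative `∂f/∂rᵢ`. -/
noncomputable def pd (i : Fin 3) (f : (Fin 3 → ℝ) → ℝ) (r : Fin 3 → ℝ) : ℝ :=
  fderiv ℝ f r (Pi.single i 1)

/-- The curl `∇ × F` of a vector field on ℝ³. -/
noncomputable def curl (F : (Fin 3 → ℝ) → Fin 3 → ℝ) (r : Fin 3 → ℝ) : Fin 3 → ℝ :=
  ![pd 1 (fun x => F x 2) r - pd 2 (fun x => F x 1) r,
    pd 2 (fun x => F x 0) r - pd 0 (fun x => F x 2) r,
    pd 0 (fun x => F x 1) r - pd 1 (fun x => F x 0) r]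

private lemma hasDerivAt_dot {F G : ℝ → Fin 3 → ℝ} {F' G' : Fin 3 → ℝ} {t : ℝ}
    (hF : HasDerivAt F F' t) (hG : HasDerivAt G G' t) :
    HasDerivAt (fun s => F s ⬝ᵥ G s) (F' ⬝ᵥ G t + F t ⬝ᵥ G') t := by
  simp only [dotProduct]
  rw [← Finset.sum_add_distrib]
  exact HasDerivAt.fun_sum fun i _ => (hasDerivAt_pi.1 hF i).mul (hasDerivAt_pi.1 hG i)

private lemma continuous_dot {α : Type*} [TopologicalSpace α] {F G : α → Fin 3 → ℝ}
    (hF : Continuous F) (hG : Continuous G) : Continuous fun z => F z ⬝ᵥ G z := by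
  simp only [dotProduct]
  exact continuous_finset_sum _ fun i _ =>
    ((continuous_apply i).comp hF).mul ((continuous_apply i).comp hG)

private lemma continuous_clm_apply' {α : Type*} [TopologicalSpace α]
    {L : α → (Fin 3 → ℝ) →L[ℝ] (Fin 3 → ℝ)} {v : α → Fin 3 → ℝ}
    (hL : Continuous L) (hv : Continuous v) : Continuous fun z => L z (v z) :=
  isBoundedBilinearMap_apply.continuous.comp (hL.prodMk hv)

private lemma fderiv_comp_apply {S : (Fin 3 → ℝ) → Fin 3 → ℝ} (hS : ContDiff ℝ 1 S)
    (p v : Fin 3 → ℝ) (j : Fin 3) :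
    fderiv ℝ (fun x => S x j) p v = fderiv ℝ S p v j := by
  have h : HasFDerivAt S (fderiv ℝ S p) p := (hS.differentiable one_ne_zero p).hasFDerivAt
  have h2 := (ContinuousLinearMap.proj (R := ℝ) (φ := fun _ : Fin 3 => ℝ) j).hasFDerivAt.comp p h
  rw [show (fun x => S x j)
      = (ContinuousLinearMap.proj (R := ℝ) (φ := fun _ : Fin 3 => ℝ) j) ∘ S from rfl, h2.fderiv]
  rfl

private lemma curl_dot_cross {S : (Fin 3 → ℝ) → Fin 3 → ℝ} (hS : ContDiff ℝ 1 S)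
    (p u v : Fin 3 → ℝ) :
    curl S p ⬝ᵥ crossProduct u v = fderiv ℝ S p u ⬝ᵥ v - fderiv ℝ S p v ⬝ᵥ u := by
  have key : ∀ (w : Fin 3 → ℝ) (j : Fin 3),
      fderiv ℝ S p w j = ∑ i, w i * fderiv ℝ S p (Pi.single i 1) j := by
    intro w j
    have hw : w = ∑ i, w i • (Pi.single i 1 : Fin 3 → ℝ) := by
      funext k
      simp [Pi.single_apply, Finset.sum_apply]
    conv_lhs => rw [hw]
    rw [map_sum]
    simp [Finset.sum_apply]
  have hc : ∀ (i j : Fin 3), pd i (fun x => S x j) p = fderiv ℝ S p (Pi.single i 1) j :=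
    fun i j => fderiv_comp_apply hS p _ j
  simp only [curl, cross_apply, dotProduct, Fin.sum_univ_three, key u, key v, hc]
  simp only [Matrix.cons_val_zero, Matrix.cons_val_one, Matrix.head_cons,
    Matrix.cons_val_two, Matrix.tail_cons]
  ring

private lemma interval_fubini {f : ℝ → ℝ → ℝ} (hc : Continuous (Function.uncurry f))
    {b d : ℝ} (hb : 0 ≤ b) (hd : 0 ≤ d) :
    ∫ x in (0:ℝ)..b, ∫ y in (0:ℝ)..d, f x y = ∫ y in (0:ℝ)..d, ∫ x in (0:ℝ)..b, f x y := by
  rw [intervalIntegral.integral_of_le hb, intervalIntegral.integral_of_le hd]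
  simp_rw [intervalIntegral.integral_of_le hd, intervalIntegral.integral_of_le hb]
  apply MeasureTheory.integral_integral_swap
  rw [MeasureTheory.Measure.prod_restrict]
  exact ((hc.continuousOn).integrableOn_compact (isCompact_Icc.prod isCompact_Icc)).mono_set
    (Set.prod_mono Set.Ioc_subset_Icc_self Set.Ioc_subset_Icc_self)
set_option maxHeartbeats 1000000 in
/-- Stokes's theorem for the gyro-average: the gyro-average of the
tangential component of `S` equals `−ρ/2` times the disc average of the parallel
component of `∇ × S`. -/
theorem gyroaverage_tangential_eq_disc_average_curl
    (b0 e1 e2 : Fin 3 → ℝ)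
    (hb : b0 ⬝ᵥ b0 = 1) (he1 : e1 ⬝ᵥ e1 = 1) (he2 : e2 ⬝ᵥ e2 = 1)
    (hbe1 : b0 ⬝ᵥ e1 = 0) (hbe2 : b0 ⬝ᵥ e2 = 0) (he12 : e1 ⬝ᵥ e2 = 0)
    (hcross : b0 = crossProduct e1 e2)
    (τ ρh : ℝ → Fin 3 → ℝ)
    (hτ : ∀ θ, τ θ = (-Real.sin θ) • e1 - Real.cos θ • e2)
    (hρh : ∀ θ, ρh θ = Real.cos θ • e1 - Real.sin θ • e2)
    (S : (Fin 3 → ℝ) → Fin 3 → ℝ) (hS : ContDiff ℝ 1 S) :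
    ∀ (R : Fin 3 → ℝ) (ρ : ℝ), 0 < ρ →
      (1 / (2 * π)) * ∫ θ in (0:ℝ)..(2 * π), S (R + ρ • ρh θ) ⬝ᵥ τ θ
      = -(ρ / (2 * π)) *
          ∫ a in (0:ℝ)..1, ∫ θ in (0:ℝ)..(2 * π),
            a * (curl S (R + (a * ρ) • ρh θ) ⬝ᵥ b0) := by
  intro R ρ hρ
  have hρh_eq : ρh = fun θ => Real.cos θ • e1 - Real.sin θ • e2 := funext hρh
  have hτ_eq : τ = fun θ => (-Real.sin θ) • e1 - Real.cos θ • e2 := funext hτ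
  have hτρ : ∀ θ, HasDerivAt ρh (τ θ) θ := by
    intro θ
    rw [hρh_eq, hτ θ]
    exact ((Real.hasDerivAt_cos θ).smul_const e1).sub ((Real.hasDerivAt_sin θ).smul_const e2)
  have hρh_cont : Continuous ρh := by
    rw [hρh_eq]
    exact (Real.continuous_cos.smul continuous_const).sub (Real.continuous_sin.smul continuous_const)
  have hτ_cont : Continuous τ := by
    rw [hτ_eq]
    exact (Real.continuous_sin.neg.smul continuous_const).sub
      (Real.continuous_cos.smul continuous_const)
  have hSd : Differentiable ℝ S := hS.differentiable one_ne_zero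
  -- derivatives of the position map
  have hxa : ∀ (θ a : ℝ), HasDerivAt (fun a' => R + (a' * ρ) • ρh θ) (ρ • ρh θ) a := by
    intro θ a
    have h1 : HasDerivAt (fun a' : ℝ => a' * ρ) ρ a := by
      simpa using (hasDerivAt_id a).mul_const ρ
    exact (h1.smul_const (ρh θ)).const_add R
  have hxθ : ∀ (a θ : ℝ), HasDerivAt (fun θ' => R + (a * ρ) • ρh θ') ((a * ρ) • τ θ) θ :=
    fun a θ => (((hτρ θ).const_smul (a * ρ)).const_add R)
  -- derivative in a of a' * (S ⬝ᵥ τ)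
  have hA : ∀ (θ a : ℝ), HasDerivAt (fun a' => a' * (S (R + (a' * ρ) • ρh θ) ⬝ᵥ τ θ))
      (S (R + (a * ρ) • ρh θ) ⬝ᵥ τ θ
        + (a * ρ) * (fderiv ℝ S (R + (a * ρ) • ρh θ) (ρh θ) ⬝ᵥ τ θ)) a := by
    intro θ a
    have h0 : HasDerivAt (fun a' => S (R + (a' * ρ) • ρh θ))
        (fderiv ℝ S (R + (a * ρ) • ρh θ) (ρ • ρh θ)) a :=
      (hSd _).hasFDerivAt.comp_hasDerivAt a (hxa θ a)
    have h1 : HasDerivAt (fun a' => S (R + (a' * ρ) • ρh θ) ⬝ᵥ τ θ)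
        (fderiv ℝ S (R + (a * ρ) • ρh θ) (ρ • ρh θ) ⬝ᵥ τ θ) a := by
      simpa using hasDerivAt_dot h0 (hasDerivAt_const a (τ θ))
    have h2 := (hasDerivAt_id a).mul h1
    refine h2.congr_deriv ?_
    rw [_root_.map_smul, smul_dotProduct]
    simp only [smul_eq_mul, id_eq]
    ring
  -- derivative in θ of S ⬝ᵥ ρh
  have hB : ∀ (a θ : ℝ), HasDerivAt (fun θ' => S (R + (a * ρ) • ρh θ') ⬝ᵥ ρh θ')
      ((a * ρ) * (fderiv ℝ S (R + (a * ρ) • ρh θ) (τ θ) ⬝ᵥ ρh θ)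
        + S (R + (a * ρ) • ρh θ) ⬝ᵥ τ θ) θ := by
    intro a θ
    have h0 : HasDerivAt (fun θ' => S (R + (a * ρ) • ρh θ'))
        (fderiv ℝ S (R + (a * ρ) • ρh θ) ((a * ρ) • τ θ)) θ :=
      (hSd _).hasFDerivAt.comp_hasDerivAt θ (hxθ a θ)
    have h1 := hasDerivAt_dot h0 (hτρ θ)
    convert h1 using 1
    rw [_root_.map_smul, smul_dotProduct]
    simp only [smul_eq_mul]
  -- the curl identity
  have hb0 : ∀ θ, crossProduct (τ θ) (ρh θ) = b0 := by
    intro θ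
    rw [hτ θ, hρh θ, hcross]
    have hsc := Real.sin_sq_add_cos_sq θ
    funext i
    fin_cases i <;>
      simp [cross_apply, smul_eq_mul]
    · linear_combination (e1 1 * e2 2 - e1 2 * e2 1) * hsc
    · linear_combination (e1 2 * e2 0 - e1 0 * e2 2) * hsc
    · linear_combination (e1 0 * e2 1 - e1 1 * e2 0) * hsc
  have hC : ∀ (a θ : ℝ), curl S (R + (a * ρ) • ρh θ) ⬝ᵥ b0
      = fderiv ℝ S (R + (a * ρ) • ρh θ) (τ θ) ⬝ᵥ ρh θ
        - fderiv ℝ S (R + (a * ρ) • ρh θ) (ρh θ) ⬝ᵥ τ θ := by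
    intro a θ
    rw [← hb0 θ, curl_dot_cross hS]
  -- joint continuity facts, p = (a, θ)
  have hxc : Continuous (fun p : ℝ × ℝ => R + (p.1 * ρ) • ρh p.2) :=
    continuous_const.add ((continuous_fst.mul continuous_const).smul
      (hρh_cont.comp continuous_snd))
  have hdsc : Continuous (fun p : ℝ × ℝ => fderiv ℝ S (R + (p.1 * ρ) • ρh p.2)) :=
    (hS.continuous_fderiv one_ne_zero).comp hxc
  have hjf : Continuous (fun p : ℝ × ℝ => S (R + (p.1 * ρ) • ρh p.2) ⬝ᵥ τ p.2) :=
    continuous_dot (hS.continuous.comp hxc) (hτ_cont.comp continuous_snd)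
  have hj1 : Continuous (fun p : ℝ × ℝ =>
      fderiv ℝ S (R + (p.1 * ρ) • ρh p.2) (ρh p.2) ⬝ᵥ τ p.2) :=
    continuous_dot (continuous_clm_apply' hdsc (hρh_cont.comp continuous_snd))
      (hτ_cont.comp continuous_snd)
  have hj2 : Continuous (fun p : ℝ × ℝ =>
      fderiv ℝ S (R + (p.1 * ρ) • ρh p.2) (τ p.2) ⬝ᵥ ρh p.2) :=
    continuous_dot (continuous_clm_apply' hdsc (hτ_cont.comp continuous_snd))
      (hρh_cont.comp continuous_snd)
  have hjh : Continuous (fun p : ℝ × ℝ =>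
      S (R + (p.1 * ρ) • ρh p.2) ⬝ᵥ τ p.2
        + (p.1 * ρ) * (fderiv ℝ S (R + (p.1 * ρ) • ρh p.2) (ρh p.2) ⬝ᵥ τ p.2)) :=
    hjf.add ((continuous_fst.mul continuous_const).mul hj1)
  -- Step 1: FTC in a
  have step1 : ∀ θ : ℝ, S (R + ρ • ρh θ) ⬝ᵥ τ θ
      = ∫ a in (0:ℝ)..1, (S (R + (a * ρ) • ρh θ) ⬝ᵥ τ θ
          + (a * ρ) * (fderiv ℝ S (R + (a * ρ) • ρh θ) (ρh θ) ⬝ᵥ τ θ)) := by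
    intro θ
    have hcont : Continuous (fun a : ℝ => S (R + (a * ρ) • ρh θ) ⬝ᵥ τ θ
        + (a * ρ) * (fderiv ℝ S (R + (a * ρ) • ρh θ) (ρh θ) ⬝ᵥ τ θ)) :=
      hjh.comp (continuous_id.prodMk continuous_const)
    have h := intervalIntegral.integral_eq_sub_of_hasDerivAt (a := (0:ℝ)) (b := 1)
      (f := fun a => a * (S (R + (a * ρ) • ρh θ) ⬝ᵥ τ θ)) (fun a _ => hA θ a)
      (hcont.intervalIntegrable _ _)
    rw [h]
    simp
  -- Step 2: the θ-integral of the exact derivative vanishes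
  have step2 : ∀ a : ℝ, (∫ θ in (0:ℝ)..(2 * π),
      ((a * ρ) * (fderiv ℝ S (R + (a * ρ) • ρh θ) (τ θ) ⬝ᵥ ρh θ)
        + S (R + (a * ρ) • ρh θ) ⬝ᵥ τ θ)) = 0 := by
    intro a
    have hcont : Continuous (fun θ : ℝ =>
        (a * ρ) * (fderiv ℝ S (R + (a * ρ) • ρh θ) (τ θ) ⬝ᵥ ρh θ)
          + S (R + (a * ρ) • ρh θ) ⬝ᵥ τ θ) :=
      (continuous_const.mul (hj2.comp (continuous_const.prodMk continuous_id))).add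
        (hjf.comp (continuous_const.prodMk continuous_id))
    have h := intervalIntegral.integral_eq_sub_of_hasDerivAt (a := (0:ℝ)) (b := 2 * π)
      (f := fun θ => S (R + (a * ρ) • ρh θ) ⬝ᵥ ρh θ) (fun θ _ => hB a θ)
      (hcont.intervalIntegrable _ _)
    rw [h]
    have hper : ρh (2 * π) = ρh 0 := by
      rw [hρh, hρh]
      simp
    simp [hper]
  -- Step 3: for each a, compute the θ-integral of h
  have step3 : ∀ a : ℝ, (∫ θ in (0:ℝ)..(2 * π),
      (S (R + (a * ρ) • ρh θ) ⬝ᵥ τ θ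
        + (a * ρ) * (fderiv ℝ S (R + (a * ρ) • ρh θ) (ρh θ) ⬝ᵥ τ θ)))
      = -(ρ * ∫ θ in (0:ℝ)..(2 * π),
          a * (fderiv ℝ S (R + (a * ρ) • ρh θ) (τ θ) ⬝ᵥ ρh θ
            - fderiv ℝ S (R + (a * ρ) • ρh θ) (ρh θ) ⬝ᵥ τ θ)) := by
    intro a
    have hcD : Continuous (fun θ : ℝ =>
        (a * ρ) * (fderiv ℝ S (R + (a * ρ) • ρh θ) (τ θ) ⬝ᵥ ρh θ)
          + S (R + (a * ρ) • ρh θ) ⬝ᵥ τ θ) :=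
      (continuous_const.mul (hj2.comp (continuous_const.prodMk continuous_id))).add
        (hjf.comp (continuous_const.prodMk continuous_id))
    have hcE : Continuous (fun θ : ℝ =>
        ρ * (a * (fderiv ℝ S (R + (a * ρ) • ρh θ) (τ θ) ⬝ᵥ ρh θ
          - fderiv ℝ S (R + (a * ρ) • ρh θ) (ρh θ) ⬝ᵥ τ θ))) :=
      continuous_const.mul (continuous_const.mul
        (((hj2.comp (continuous_const.prodMk continuous_id))).sub
          ((hj1.comp (continuous_const.prodMk continuous_id)))))
    have hsplit : ∀ θ : ℝ,
        S (R + (a * ρ) • ρh θ) ⬝ᵥ τ θ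
          + (a * ρ) * (fderiv ℝ S (R + (a * ρ) • ρh θ) (ρh θ) ⬝ᵥ τ θ)
        = ((a * ρ) * (fderiv ℝ S (R + (a * ρ) • ρh θ) (τ θ) ⬝ᵥ ρh θ)
            + S (R + (a * ρ) • ρh θ) ⬝ᵥ τ θ)
          - ρ * (a * (fderiv ℝ S (R + (a * ρ) • ρh θ) (τ θ) ⬝ᵥ ρh θ
            - fderiv ℝ S (R + (a * ρ) • ρh θ) (ρh θ) ⬝ᵥ τ θ)) := by
      intro θ; ring
    rw [intervalIntegral.integral_congr (fun θ _ => hsplit θ),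
      intervalIntegral.integral_sub (hcD.intervalIntegrable _ _) (hcE.intervalIntegrable _ _),
      step2 a, intervalIntegral.integral_const_mul]
    ring
  -- Fubini
  have h2π : (0:ℝ) ≤ 2 * π := by positivity
  have fub : (∫ θ in (0:ℝ)..(2 * π), ∫ a in (0:ℝ)..1,
      (S (R + (a * ρ) • ρh θ) ⬝ᵥ τ θ
        + (a * ρ) * (fderiv ℝ S (R + (a * ρ) • ρh θ) (ρh θ) ⬝ᵥ τ θ)))
      = ∫ a in (0:ℝ)..1, ∫ θ in (0:ℝ)..(2 * π),
        (S (R + (a * ρ) • ρh θ) ⬝ᵥ τ θ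
          + (a * ρ) * (fderiv ℝ S (R + (a * ρ) • ρh θ) (ρh θ) ⬝ᵥ τ θ)) := by
    apply interval_fubini _ h2π zero_le_one
    exact hjh.comp (continuous_snd.prodMk continuous_fst)
  -- rewrite RHS using the curl identity
  have hRHS : (∫ a in (0:ℝ)..1, ∫ θ in (0:ℝ)..(2 * π),
        a * (curl S (R + (a * ρ) • ρh θ) ⬝ᵥ b0))
      = ∫ a in (0:ℝ)..1, ∫ θ in (0:ℝ)..(2 * π),
        a * (fderiv ℝ S (R + (a * ρ) • ρh θ) (τ θ) ⬝ᵥ ρh θ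
          - fderiv ℝ S (R + (a * ρ) • ρh θ) (ρh θ) ⬝ᵥ τ θ) := by
    apply intervalIntegral.integral_congr
    intro a _
    apply intervalIntegral.integral_congr
    intro θ _
    simp only [hC a θ]
  -- put everything together
  have hmain : (∫ θ in (0:ℝ)..(2 * π), S (R + ρ • ρh θ) ⬝ᵥ τ θ)
      = -(ρ * ∫ a in (0:ℝ)..1, ∫ θ in (0:ℝ)..(2 * π),
          a * (fderiv ℝ S (R + (a * ρ) • ρh θ) (τ θ) ⬝ᵥ ρh θ
            - fderiv ℝ S (R + (a * ρ) • ρh θ) (ρh θ) ⬝ᵥ τ θ)) := by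
    rw [intervalIntegral.integral_congr (fun θ _ => step1 θ), fub,
      intervalIntegral.integral_congr (fun a _ => step3 a)]
    rw [intervalIntegral.integral_neg, intervalIntegral.integral_const_mul]
  rw [hmain, hRHS]
  ring
end

section
/- Let b̂₀ : ℝ³ → ℝ³ be a continuously differentiable vector field with |b̂₀(r)| = 1 for all r, and let Q : ℝ³ → ℝ be continuously differentiable. Then at every point, Q (∇×b̂₀)_⊥ = b̂₀ × [∇·(Q b̂₀⊗b̂₀)], where (∇×b̂₀)_⊥ := (∇×b̂₀) − ((∇×b̂₀)·b̂₀) b̂₀ and the divergence of a matrix field M is the vector field with components (∇·M)_j = Σᵢ ∂ᵢ M_{ij}. -/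
open Matrix

/-- The divergence of a matrix field, `(∇·M)_j = ∑ᵢ ∂ᵢ M_{ij}`. -/
noncomputable def matDiv (M : (Fin 3 → ℝ) → Matrix (Fin 3) (Fin 3) ℝ)
    (r : Fin 3 → ℝ) : Fin 3 → ℝ :=
  fun j => ∑ i, pd i (fun x => M x i j) r

lemma pd_mul (f g : (Fin 3 → ℝ) → ℝ) (r : Fin 3 → ℝ) (i : Fin 3)
    (hf : DifferentiableAt ℝ f r) (hg : DifferentiableAt ℝ g r) :
    pd i (fun x => f x * g x) r = pd i f r * g r + f r * pd i g r := by
  unfold pd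
  rw [fderiv_fun_mul hf hg]
  simp
  ring

lemma pd_add (f g : (Fin 3 → ℝ) → ℝ) (r : Fin 3 → ℝ) (i : Fin 3)
    (hf : DifferentiableAt ℝ f r) (hg : DifferentiableAt ℝ g r) :
    pd i (fun x => f x + g x) r = pd i f r + pd i g r := by
  unfold pd
  rw [fderiv_fun_add hf hg]
  simp

lemma pd_const (c : ℝ) (r : Fin 3 → ℝ) (i : Fin 3) :
    pd i (fun _ => c) r = 0 := by
  unfold pd; simp

/-- for a unit vector field `b̂₀` and scalar field `Q`,
`Q (∇×b̂₀)_⊥ = b̂₀ × [∇·(Q b̂₀⊗b̂₀)]`. -/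
theorem perp_curl_eq_cross_div_outer
    (b : (Fin 3 → ℝ) → Fin 3 → ℝ) (hb : ContDiff ℝ 1 b)
    (hunit : ∀ r, b r ⬝ᵥ b r = 1)
    (Q : (Fin 3 → ℝ) → ℝ) (hQ : ContDiff ℝ 1 Q) :
    ∀ r : Fin 3 → ℝ,
      Q r • (curl b r - (curl b r ⬝ᵥ b r) • b r)
      = crossProduct (b r) (matDiv (fun x => Q x • vecMulVec (b x) (b x)) r) := by
  intro r
  have hbd : Differentiable ℝ b := hb.differentiable one_ne_zero
  have hQd : Differentiable ℝ Q := hQ.differentiable one_ne_zero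
  have hbj : ∀ j : Fin 3, Differentiable ℝ (fun x => b x j) := fun j =>
    (ContinuousLinearMap.proj j : (Fin 3 → ℝ) →L[ℝ] ℝ).differentiable.comp hbd
  -- unit-norm constraints
  have hC : ∀ i : Fin 3,
      b r 0 * pd i (fun x => b x 0) r + b r 1 * pd i (fun x => b x 1) r
        + b r 2 * pd i (fun x => b x 2) r = 0 := by
    intro i
    have h1 : (fun x => b x 0 * b x 0 + b x 1 * b x 1 + b x 2 * b x 2)
        = fun _ : Fin 3 → ℝ => (1 : ℝ) := by
      funext x
      have := hunit x
      simpa [dotProduct, Fin.sum_univ_three] using this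
    have h0 : pd i (fun x => b x 0 * b x 0 + b x 1 * b x 1 + b x 2 * b x 2) r = 0 := by
      rw [h1]; exact pd_const 1 r i
    rw [pd_add _ _ r i (((hbj 0 r).fun_mul (hbj 0 r)).fun_add ((hbj 1 r).fun_mul (hbj 1 r)))
        ((hbj 2 r).fun_mul (hbj 2 r)),
      pd_add _ _ r i ((hbj 0 r).fun_mul (hbj 0 r)) ((hbj 1 r).fun_mul (hbj 1 r)),
      pd_mul _ _ r i (hbj 0 r) (hbj 0 r), pd_mul _ _ r i (hbj 1 r) (hbj 1 r),
      pd_mul _ _ r i (hbj 2 r) (hbj 2 r)] at h0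
    linarith
  have hU : b r 0 * b r 0 + b r 1 * b r 1 + b r 2 * b r 2 = 1 := by
    have := hunit r
    simpa [dotProduct, Fin.sum_univ_three] using this
  -- compute matDiv components
  have hM : ∀ j : Fin 3, matDiv (fun x => Q x • vecMulVec (b x) (b x)) r j
      = ∑ i, (pd i Q r * (b r i * b r j)
          + Q r * (pd i (fun x => b x i) r * b r j + b r i * pd i (fun x => b x j) r)) := by
    intro j
    unfold matDiv
    refine Finset.sum_congr rfl fun i _ => ?_
    have he : (fun x => (Q x • vecMulVec (b x) (b x)) i j)
        = fun x => Q x * (b x i * b x j) := by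
      funext x
      simp [vecMulVec_apply, Matrix.smul_apply]
    rw [he, pd_mul _ _ r i (hQd r) ((hbj i r).fun_mul (hbj j r)),
      pd_mul _ _ r i (hbj i r) (hbj j r)]
  have hC0 := hC 0
  have hC1 := hC 1
  have hC2 := hC 2
  funext k
  fin_cases k <;>
    simp [crossProduct, curl, dotProduct, Fin.sum_univ_three, hM, Matrix.vecHead, Matrix.vecTail, Function.comp, Pi.smul_apply, smul_eq_mul]
  · linear_combination -(Q r * (pd 1 (fun x => b x 2) r - pd 2 (fun x => b x 1) r)) * hU
      + Q r * b r 2 * hC1 - Q r * b r 1 * hC2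
  · linear_combination -(Q r * (pd 2 (fun x => b x 0) r - pd 0 (fun x => b x 2) r)) * hU
      + Q r * b r 0 * hC2 - Q r * b r 2 * hC0
  · linear_combination -(Q r * (pd 0 (fun x => b x 1) r - pd 1 (fun x => b x 0) r)) * hU
      + Q r * b r 1 * hC0 - Q r * b r 0 * hC1
end

section
/- Let g : ℝ³ × ℝ × ℝ × ℝ → ℝ, (r, u∥, μ, t) ↦ g(r, u∥, μ, t), be continuously differentiable and compactly supported, and let V : ℝ³ × ℝ × ℝ × ℝ → ℝ³ and a : ℝ³ × ℝ × ℝ × ℝ → ℝ be continuously differentiable. If the conservative transport (Vlasov) equation ∂_t g + ∇_r·(g V) + ∂_{u∥}(g a) = 0 holds at every point, then the velocity moments ϱ(r, t) := ∫∫ g(r, u∥, μ, t) du∥ dμ and 𝒥(r, t) := ∫∫ g(r, u∥, μ, t) V(r, u∥, μ, t) du∥ dμ satisfy the continuity equation ∂_t ϱ + ∇·𝒥 = 0 at every (r, t). -/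
open Matrix MeasureTheory

/-- The divergence `∇·F` of a vector field on ℝ³. -/
noncomputable def divg (F : (Fin 3 → ℝ) → Fin 3 → ℝ) (r : Fin 3 → ℝ) : ℝ :=
  ∑ i, pd i (fun x => F x i) r

open Set Metric

set_option linter.unusedSectionVars false

section aux

variable {H : Type*} [NormedAddCommGroup H] [NormedSpace ℝ H]
  {E : Type*} [NormedAddCommGroup E] [NormedSpace ℝ E] [CompleteSpace E]

lemma slice_hasFDerivAt (f : H × (ℝ × ℝ) → E) (hf : ContDiff ℝ 1 f)
    (x : H) (p : ℝ × ℝ) :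
    HasFDerivAt (fun x' => f (x', p))
      ((fderiv ℝ f (x, p)).comp (ContinuousLinearMap.inl ℝ H (ℝ × ℝ))) x :=
  ((hf.differentiable one_ne_zero (x, p)).hasFDerivAt).comp x (hasFDerivAt_prodMk_left x p)

lemma aux_key (f : H × (ℝ × ℝ) → E) (hf : ContDiff ℝ 1 f)
    (hsupp : HasCompactSupport f) (x₀ : H) :
    HasFDerivAt (fun x => ∫ p : ℝ × ℝ, f (x, p))
      (∫ p : ℝ × ℝ, (fderiv ℝ f (x₀, p)).comp (ContinuousLinearMap.inl ℝ H (ℝ × ℝ))) x₀ ∧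
    Integrable (fun p : ℝ × ℝ =>
      (fderiv ℝ f (x₀, p)).comp (ContinuousLinearMap.inl ℝ H (ℝ × ℝ))) := by
  obtain ⟨C, hC⟩ := (hsupp.fderiv ℝ).exists_bound_of_continuous (hf.continuous_fderiv one_ne_zero)
  set S : Set (ℝ × ℝ) := Prod.snd '' tsupport f with hS
  have hScomp : IsCompact S := hsupp.image continuous_snd
  set F' : H → ℝ × ℝ → H →L[ℝ] E := fun x p =>
    (fderiv ℝ f (x, p)).comp (ContinuousLinearMap.inl ℝ H (ℝ × ℝ)) with hF'
  have hnorm : ∀ x p, ‖F' x p‖ ≤ C := by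
    intro x p
    refine ContinuousLinearMap.opNorm_le_bound _ ((norm_nonneg _).trans (hC (x, p)))
      fun v => ?_
    calc ‖fderiv ℝ f (x, p) (v, 0)‖ ≤ ‖fderiv ℝ f (x, p)‖ * ‖((v, 0) : H × (ℝ × ℝ))‖ :=
          (fderiv ℝ f (x, p)).le_opNorm _
      _ = ‖fderiv ℝ f (x, p)‖ * ‖v‖ := by
          rw [Prod.norm_def]; simp [max_eq_left (norm_nonneg v)]
      _ ≤ C * ‖v‖ := mul_le_mul_of_nonneg_right (hC _) (norm_nonneg v)
  have hzero : ∀ x p, p ∉ S → F' x p = 0 := by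
    intro x p hp
    have hxp : (x, p) ∉ tsupport f := fun h => hp ⟨(x, p), h, rfl⟩
    simp only [hF']
    rw [fderiv_of_notMem_tsupport ℝ hxp]
    simp
  have hcont : ∀ x, Continuous (F' x) := by
    intro x
    exact ((hf.continuous_fderiv one_ne_zero).comp (Continuous.prodMk_right x)).clm_comp continuous_const
  have hsupp' : ∀ x, HasCompactSupport (F' x) := fun x =>
    HasCompactSupport.intro hScomp (fun p hp => hzero x p hp)
  have hF'int : Integrable (F' x₀) := (hcont x₀).integrable_of_hasCompactSupport (hsupp' x₀)
  have hbound : ∀ᵐ p : ℝ × ℝ, ∀ x ∈ ball x₀ 1, ‖F' x p‖ ≤ S.indicator (fun _ => C) p := by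
    refine Filter.Eventually.of_forall fun p x _ => ?_
    by_cases hp : p ∈ S
    · rw [indicator_of_mem hp]; exact hnorm x p
    · rw [indicator_of_notMem hp, hzero x p hp]; simp
  have hboundint : Integrable (S.indicator (fun _ => C)) := by
    rw [integrable_indicator_iff hScomp.measurableSet]
    exact integrableOn_const hScomp.measure_lt_top.ne
  refine ⟨hasFDerivAt_integral_of_dominated_of_fderiv_le (ball_mem_nhds x₀ one_pos)
    (Filter.Eventually.of_forall fun x =>
      ((hf.continuous.comp (Continuous.prodMk_right x)).aestronglyMeasurable))
    ?_ (hF'int.aestronglyMeasurable) hbound hboundint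
    (Filter.Eventually.of_forall fun p x _ => slice_hasFDerivAt f hf x p), hF'int⟩
  · refine (hf.continuous.comp (Continuous.prodMk_right x₀)).integrable_of_hasCompactSupport
      (HasCompactSupport.intro hScomp fun p hp => ?_)
    show f (x₀, p) = 0
    exact image_eq_zero_of_notMem_tsupport (fun h => hp ⟨(x₀, p), h, rfl⟩)

lemma aux_fderiv (f : H × (ℝ × ℝ) → E) (hf : ContDiff ℝ 1 f)
    (hsupp : HasCompactSupport f) (x₀ : H) (v : H) :
    fderiv ℝ (fun x => ∫ p : ℝ × ℝ, f (x, p)) x₀ v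
      = ∫ p : ℝ × ℝ, fderiv ℝ (fun x => f (x, p)) x₀ v := by
  obtain ⟨hd, hint⟩ := aux_key f hf hsupp x₀
  rw [hd.fderiv, ContinuousLinearMap.integral_apply hint]
  exact integral_congr_ae (Filter.Eventually.of_forall fun p =>
    DFunLike.congr_fun (slice_hasFDerivAt f hf x₀ p).fderiv.symm v)

lemma aux_int (f : H × (ℝ × ℝ) → E) (hf : ContDiff ℝ 1 f)
    (hsupp : HasCompactSupport f) (x₀ : H) (v : H) :
    Integrable (fun p : ℝ × ℝ => fderiv ℝ (fun x => f (x, p)) x₀ v) := by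
  obtain ⟨-, hint⟩ := aux_key f hf hsupp x₀
  exact ((ContinuousLinearMap.apply ℝ E v).integrable_comp hint).congr
    (Filter.Eventually.of_forall fun p =>
      DFunLike.congr_fun (slice_hasFDerivAt f hf x₀ p).fderiv.symm v)

end aux

lemma integral_deriv_slice_zero (h : (Fin 3 → ℝ) × ℝ × ℝ × ℝ → ℝ)
    (hh : ContDiff ℝ 1 h) (hs : HasCompactSupport h) (r : Fin 3 → ℝ) (t : ℝ)
    (hint : Integrable (fun p : ℝ × ℝ => deriv (fun u' => h (r, u', p.2, t)) p.1)) :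
    ∫ p : ℝ × ℝ, deriv (fun u' => h (r, u', p.2, t)) p.1 = 0 := by
  have inner : ∀ μval : ℝ, ∫ u : ℝ, deriv (fun u' => h (r, u', μval, t)) u = 0 := by
    intro μval
    set φ : ℝ → ℝ := fun u => h (r, u, μval, t) with hφdef
    have hφ : ContDiff ℝ 1 φ :=
      hh.comp (contDiff_const.prodMk (contDiff_id.prodMk (contDiff_const.prodMk contDiff_const)))
    have hφs : HasCompactSupport φ := by
      refine HasCompactSupport.intro (K := (fun y : (Fin 3 → ℝ) × ℝ × ℝ × ℝ => y.2.1) '' tsupport h)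
        (hs.image (by fun_prop)) fun u hu => ?_
      by_contra h0
      exact hu ⟨(r, u, μval, t), subset_tsupport _ h0, rfl⟩
    have hd : Integrable (deriv φ) :=
      (hφ.continuous_deriv le_rfl).integrable_of_hasCompactSupport hφs.deriv
    calc ∫ u : ℝ, deriv φ u
        = (∫ u in Iic (0:ℝ), deriv φ u) + ∫ u in Ioi (0:ℝ), deriv φ u :=
          (intervalIntegral.integral_Iic_add_Ioi hd.integrableOn hd.integrableOn).symm
      _ = φ 0 + -φ 0 := by
          rw [HasCompactSupport.integral_Iic_deriv_eq hφ hφs 0,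
            HasCompactSupport.integral_Ioi_deriv_eq hφ hφs 0]
      _ = 0 := by ring
  rw [MeasureTheory.Measure.volume_eq_prod] at hint ⊢
  rw [integral_prod_symm _ hint]
  calc (∫ y : ℝ, ∫ x : ℝ, deriv (fun u' => h (r, u', y, t)) x)
      = ∫ y : ℝ, (0:ℝ) := integral_congr_ae (Filter.Eventually.of_forall fun y => inner y)
    _ = 0 := integral_zero _ _
/-- if `g` satisfies the conservative transport (Vlasov) equation, its
velocity moments `ϱ = ∫∫ g` and `𝒥 = ∫∫ g V` satisfy the continuity equation
`∂_t ϱ + ∇·𝒥 = 0`. -/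
theorem moments_continuity_equation
    (g : (Fin 3 → ℝ) × ℝ × ℝ × ℝ → ℝ)
    (hg : ContDiff ℝ 1 g) (hgsupp : HasCompactSupport g)
    (V : (Fin 3 → ℝ) × ℝ × ℝ × ℝ → Fin 3 → ℝ) (hV : ContDiff ℝ 1 V)
    (a : (Fin 3 → ℝ) × ℝ × ℝ × ℝ → ℝ) (ha : ContDiff ℝ 1 a)
    (hvlasov : ∀ (r : Fin 3 → ℝ) (u μ t : ℝ),
      deriv (fun t' => g (r, u, μ, t')) t
      + divg (fun x => g (x, u, μ, t) • V (x, u, μ, t)) r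
      + deriv (fun u' => g (r, u', μ, t) * a (r, u', μ, t)) u = 0) :
    ∀ (r : Fin 3 → ℝ) (t : ℝ),
      deriv (fun t' => ∫ p : ℝ × ℝ, g (r, p.1, p.2, t')) t
      + divg (fun x => ∫ p : ℝ × ℝ, g (x, p.1, p.2, t) • V (x, p.1, p.2, t)) r = 0 := by
  intro r t
  have hgc := hg.continuous
  have hVc := hV.continuous
  -- time part
  have he₁ : ContDiff ℝ 1 (fun q : ℝ × (ℝ × ℝ) =>
      ((r, q.2.1, q.2.2, q.1) : (Fin 3 → ℝ) × ℝ × ℝ × ℝ)) :=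
    contDiff_const.prodMk ((contDiff_fst.comp contDiff_snd).prodMk
      ((contDiff_snd.comp contDiff_snd).prodMk contDiff_fst))
  have hf₁ : ContDiff ℝ 1 (fun q : ℝ × (ℝ × ℝ) => g (r, q.2.1, q.2.2, q.1)) := hg.comp he₁
  have hf₁s : HasCompactSupport (fun q : ℝ × (ℝ × ℝ) => g (r, q.2.1, q.2.2, q.1)) := by
    refine HasCompactSupport.intro
      (K := (fun y : (Fin 3 → ℝ) × ℝ × ℝ × ℝ => (y.2.2.2, (y.2.1, y.2.2.1))) '' tsupport g)
      (hgsupp.image (by fun_prop)) fun q hq => ?_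
    show g (r, q.2.1, q.2.2, q.1) = 0
    by_contra h0
    exact hq ⟨(r, q.2.1, q.2.2, q.1), subset_tsupport _ h0, rfl⟩
  have h1 : deriv (fun t' => ∫ p : ℝ × ℝ, g (r, p.1, p.2, t')) t
      = ∫ p : ℝ × ℝ, deriv (fun t' => g (r, p.1, p.2, t')) t := by
    rw [← fderiv_apply_one_eq_deriv]
    rw [aux_fderiv (fun q : ℝ × (ℝ × ℝ) => g (r, q.2.1, q.2.2, q.1)) hf₁ hf₁s t 1]
    exact integral_congr_ae (Filter.Eventually.of_forall fun p => fderiv_apply_one_eq_deriv)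
  have h1int : Integrable (fun p : ℝ × ℝ => deriv (fun t' => g (r, p.1, p.2, t')) t) :=
    (aux_int (fun q : ℝ × (ℝ × ℝ) => g (r, q.2.1, q.2.2, q.1)) hf₁ hf₁s t 1).congr
      (Filter.Eventually.of_forall fun p => fderiv_apply_one_eq_deriv)
  -- space part
  have he₂ : ContDiff ℝ 1 (fun q : (Fin 3 → ℝ) × (ℝ × ℝ) =>
      ((q.1, q.2.1, q.2.2, t) : (Fin 3 → ℝ) × ℝ × ℝ × ℝ)) :=
    contDiff_fst.prodMk ((contDiff_fst.comp contDiff_snd).prodMk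
      ((contDiff_snd.comp contDiff_snd).prodMk contDiff_const))
  have hf₂ : ∀ i : Fin 3, ContDiff ℝ 1 (fun q : (Fin 3 → ℝ) × (ℝ × ℝ) =>
      (g (q.1, q.2.1, q.2.2, t) • V (q.1, q.2.1, q.2.2, t)) i) := fun i =>
    contDiff_pi.1 ((hg.comp he₂).smul (hV.comp he₂)) i
  have hf₂s : ∀ i : Fin 3, HasCompactSupport (fun q : (Fin 3 → ℝ) × (ℝ × ℝ) =>
      (g (q.1, q.2.1, q.2.2, t) • V (q.1, q.2.1, q.2.2, t)) i) := by
    intro i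
    refine HasCompactSupport.intro
      (K := (fun y : (Fin 3 → ℝ) × ℝ × ℝ × ℝ => (y.1, (y.2.1, y.2.2.1))) '' tsupport g)
      (hgsupp.image (by fun_prop)) fun q hq => ?_
    show (g (q.1, q.2.1, q.2.2, t) • V (q.1, q.2.1, q.2.2, t)) i = 0
    have hg0 : g (q.1, q.2.1, q.2.2, t) = 0 := by
      by_contra h0
      exact hq ⟨(q.1, q.2.1, q.2.2, t), subset_tsupport _ h0, rfl⟩
    rw [hg0, zero_smul]; rfl
  have hvecint : ∀ x : Fin 3 → ℝ,
      Integrable (fun p : ℝ × ℝ => g (x, p.1, p.2, t) • V (x, p.1, p.2, t)) := by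
    intro x
    refine Continuous.integrable_of_hasCompactSupport (by fun_prop) ?_
    refine HasCompactSupport.intro
      (K := (fun y : (Fin 3 → ℝ) × ℝ × ℝ × ℝ => (y.2.1, y.2.2.1)) '' tsupport g)
      (hgsupp.image (by fun_prop)) fun p hp => ?_
    show g (x, p.1, p.2, t) • V (x, p.1, p.2, t) = 0
    have hg0 : g (x, p.1, p.2, t) = 0 := by
      by_contra h0
      exact hp ⟨(x, p.1, p.2, t), subset_tsupport _ h0, rfl⟩
    rw [hg0, zero_smul]
  have h2 : ∀ i : Fin 3,
      fderiv ℝ (fun x => (∫ p : ℝ × ℝ, g (x, p.1, p.2, t) • V (x, p.1, p.2, t)) i) r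
        (Pi.single i 1)
      = ∫ p : ℝ × ℝ, fderiv ℝ
          (fun x => (g (x, p.1, p.2, t) • V (x, p.1, p.2, t)) i) r (Pi.single i 1) := by
    intro i
    have hcomp : (fun x => (∫ p : ℝ × ℝ, g (x, p.1, p.2, t) • V (x, p.1, p.2, t)) i)
        = fun x => ∫ p : ℝ × ℝ, (g (x, p.1, p.2, t) • V (x, p.1, p.2, t)) i := by
      funext x
      exact ((ContinuousLinearMap.proj (R := ℝ) (φ := fun _ : Fin 3 => ℝ) i).integral_comp_comm
        (hvecint x)).symm
    rw [hcomp]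
    exact aux_fderiv (fun q : (Fin 3 → ℝ) × (ℝ × ℝ) =>
      (g (q.1, q.2.1, q.2.2, t) • V (q.1, q.2.1, q.2.2, t)) i) (hf₂ i) (hf₂s i) r (Pi.single i 1)
  have h2int : ∀ i : Fin 3, Integrable (fun p : ℝ × ℝ =>
      fderiv ℝ (fun x => (g (x, p.1, p.2, t) • V (x, p.1, p.2, t)) i) r (Pi.single i 1)) :=
    fun i => aux_int (fun q : (Fin 3 → ℝ) × (ℝ × ℝ) =>
      (g (q.1, q.2.1, q.2.2, t) • V (q.1, q.2.1, q.2.2, t)) i) (hf₂ i) (hf₂s i) r (Pi.single i 1)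
  -- pointwise Vlasov
  have hvl : ∀ p : ℝ × ℝ,
      deriv (fun t' => g (r, p.1, p.2, t')) t
      + ∑ i : Fin 3, fderiv ℝ
          (fun x => (g (x, p.1, p.2, t) • V (x, p.1, p.2, t)) i) r (Pi.single i 1)
      = - deriv (fun u' => g (r, u', p.2, t) * a (r, u', p.2, t)) p.1 := by
    intro p
    have := hvlasov r p.1 p.2 t
    simp only [divg, pd] at this
    linarith
  have hsumint : Integrable (fun p : ℝ × ℝ => ∑ i : Fin 3,
      fderiv ℝ (fun x => (g (x, p.1, p.2, t) • V (x, p.1, p.2, t)) i) r (Pi.single i 1)) :=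
    integrable_finset_sum (f := fun i (p : ℝ × ℝ) =>
      fderiv ℝ (fun x => (g (x, p.1, p.2, t) • V (x, p.1, p.2, t)) i) r (Pi.single i 1))
      Finset.univ (fun i _ => h2int i)
  have hDint : Integrable
      (fun p : ℝ × ℝ => deriv (fun u' => g (r, u', p.2, t) * a (r, u', p.2, t)) p.1) := by
    refine ((h1int.add hsumint).neg).congr
      (Filter.Eventually.of_forall fun p => ?_)
    simp only [Pi.neg_apply, Pi.add_apply]
    rw [hvl p]; ring
  -- assemble
  simp only [divg, pd]
  rw [h1, show (∑ i : Fin 3, fderiv ℝ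
        (fun x => (∫ p : ℝ × ℝ, g (x, p.1, p.2, t) • V (x, p.1, p.2, t)) i) r (Pi.single i 1))
      = ∑ i : Fin 3, ∫ p : ℝ × ℝ, fderiv ℝ
        (fun x => (g (x, p.1, p.2, t) • V (x, p.1, p.2, t)) i) r (Pi.single i 1)
      from Finset.sum_congr rfl fun i _ => h2 i,
    ← integral_finset_sum (f := fun i (p : ℝ × ℝ) =>
      fderiv ℝ (fun x => (g (x, p.1, p.2, t) • V (x, p.1, p.2, t)) i) r (Pi.single i 1))
      Finset.univ (fun i _ => h2int i),
    ← integral_add h1int hsumint]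
  calc (∫ p : ℝ × ℝ, (deriv (fun t' => g (r, p.1, p.2, t')) t
        + ∑ i : Fin 3, fderiv ℝ
          (fun x => (g (x, p.1, p.2, t) • V (x, p.1, p.2, t)) i) r (Pi.single i 1)))
      = ∫ p : ℝ × ℝ, -(deriv (fun u' => g (r, u', p.2, t) * a (r, u', p.2, t)) p.1) :=
        integral_congr_ae (Filter.Eventually.of_forall fun p => hvl p)
    _ = -(∫ p : ℝ × ℝ, deriv (fun u' => g (r, u', p.2, t) * a (r, u', p.2, t)) p.1) :=
        integral_neg _
    _ = 0 := by
        rw [integral_deriv_slice_zero (fun y => g y * a y) (hg.mul ha) hgsupp.mul_right r t hDint]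
        ring
end

section
/- Let b̂₀ = e₃ be the third standard basis vector of ℝ³, write ∇_⊥ := (∂_x, ∂_y, 0), Δ := ∂_x² + ∂_y² + ∂_z², Δ_⊥ := ∂_x² + ∂_y², and for a vector field X write X_⊥ := X − (X·b̂₀)b̂₀ and X∥ := X·b̂₀. Let A, 𝒥 : ℝ³ → ℝ³ be three times continuously differentiable and continuous, respectively, and suppose that pointwise (i) −Δ_⊥ A∥ = 𝒥∥, (ii) −Δ A_⊥ = 𝒥_⊥ − ∇_⊥(∂_z A∥), and (iii) ∂_x A_x + ∂_y A_y = 0 (the perpendicular Coulomb gauge). Then ∇×(∇×A) = 𝒥 at every point; i.e. a solution of the decoupled Poisson systems in the perpendicular Coulomb gauge solves the curl–curl (Ampère) equation with vanishing Lagrange multiplier. -/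
open Matrix

/-- The constant unit field `b̂₀ = e₃`. -/
def e3 : Fin 3 → ℝ := Pi.single 2 1

/-- The perpendicular part `v_⊥ = v − (v·e₃) e₃`. -/
noncomputable def perp (v : Fin 3 → ℝ) : Fin 3 → ℝ := v - (v ⬝ᵥ e3) • e3

/-- The Laplacian `Δf = ∂_x²f + ∂_y²f + ∂_z²f`. -/
noncomputable def lap (f : (Fin 3 → ℝ) → ℝ) (r : Fin 3 → ℝ) : ℝ :=
  ∑ i, pd i (fun x => pd i f x) r

/-- The perpendicular Laplacian `Δ_⊥ f = ∂_x²f + ∂_y²f`. -/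
noncomputable def lapPerp (f : (Fin 3 → ℝ) → ℝ) (r : Fin 3 → ℝ) : ℝ :=
  pd 0 (fun x => pd 0 f x) r + pd 1 (fun x => pd 1 f x) r

/-- The perpendicular gradient `∇_⊥ f = (∂_x f, ∂_y f, 0)`. -/
noncomputable def gradPerp (f : (Fin 3 → ℝ) → ℝ) (r : Fin 3 → ℝ) : Fin 3 → ℝ :=
  ![pd 0 f r, pd 1 f r, 0]

lemma contDiff_pd (j : Fin 3) (f) (hf : ContDiff ℝ 2 f) :
    ContDiff ℝ 1 (fun x => pd j f x) :=
  (hf.fderiv_right (m := 1) le_rfl).clm_apply contDiff_const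

lemma pd_comm (f) (hf : ContDiff ℝ 2 f) (i j : Fin 3) (r) :
    pd i (fun x => pd j f x) r = pd j (fun x => pd i f x) r := by
  have hd : Differentiable ℝ (fderiv ℝ f) :=
    (hf.fderiv_right (m := 1) le_rfl).differentiable one_ne_zero
  have hsym := (hf.contDiffAt (x := r)).isSymmSndFDerivAt (by norm_num)
  unfold pd
  rw [fderiv_clm_apply (hd r) (differentiableAt_const _),
      fderiv_clm_apply (hd r) (differentiableAt_const _)]
  simpa using hsym (Pi.single i 1) (Pi.single j 1)

lemma pd_sub (i : Fin 3) (f g r) (hf : DifferentiableAt ℝ f r)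
    (hg : DifferentiableAt ℝ g r) :
    pd i (fun x => f x - g x) r = pd i f r - pd i g r := by
  unfold pd; rw [fderiv_fun_sub hf hg]; rfl

lemma pd_neg (i : Fin 3) (f r) :
    pd i (fun x => -f x) r = -pd i f r := by
  unfold pd; rw [fderiv_fun_neg]; rfl

/-- a solution of the decoupled Poisson systems in the perpendicular
Coulomb gauge solves the curl–curl (Ampère) equation. -/
theorem decoupled_poisson_solves_curl_curl
    (A Jv : (Fin 3 → ℝ) → Fin 3 → ℝ)
    (hA : ContDiff ℝ 3 A) (hJ : Continuous Jv)
    (hpar : ∀ r, -lapPerp (fun x => A x 2) r = Jv r 2)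
    (hperpEq : ∀ r, (fun i => -lap (fun x => perp (A x) i) r)
        = perp (Jv r) - gradPerp (fun x => pd 2 (fun y => A y 2) x) r)
    (hgauge : ∀ r, pd 0 (fun x => A x 0) r + pd 1 (fun x => A x 1) r = 0) :
    ∀ r, curl (fun x => curl A x) r = Jv r := by
  intro r
  -- components of A
  have hAk : ∀ k, ContDiff ℝ 2 (fun x => A x k) := fun k =>
    ((contDiff_pi.mp hA) k).of_le (by norm_num)
  have hdiff : ∀ i k, DifferentiableAt ℝ (fun x => pd i (fun y => A y k) x) r :=
    fun i k => ((contDiff_pd i _ (hAk k)).differentiable one_ne_zero) r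
  -- gauge: pd 1 A1 = -pd 0 A0 pointwise
  have hg1 : (fun x => pd 1 (fun y => A y 1) x) = fun x => -pd 0 (fun y => A y 0) x := by
    funext x; linarith [hgauge x]
  -- perp components at indices 0, 1
  have hperp0 : ∀ x, perp (A x) 0 = A x 0 := fun x => by
    simp [perp, e3, Pi.single_apply]
  have hperp1 : ∀ x, perp (A x) 1 = A x 1 := fun x => by
    simp [perp, e3, Pi.single_apply]
  have hJ0 : perp (Jv r) 0 = Jv r 0 := by simp [perp, e3, Pi.single_apply]
  have hJ1 : perp (Jv r) 1 = Jv r 1 := by simp [perp, e3, Pi.single_apply]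
  -- the perp equations componentwise
  have hE0 := congrFun (hperpEq r) 0
  have hE1 := congrFun (hperpEq r) 1
  simp only [Pi.sub_apply, hJ0, gradPerp] at hE0
  simp only [Pi.sub_apply, hJ1, gradPerp] at hE1
  have hlap0 : lap (fun x => perp (A x) 0) r = lap (fun x => A x 0) r := by
    congr 1; funext x; exact hperp0 x
  have hlap1 : lap (fun x => perp (A x) 1) r = lap (fun x => A x 1) r := by
    congr 1; funext x; exact hperp1 x
  rw [hlap0] at hE0
  rw [hlap1] at hE1
  simp only [lap, Fin.sum_univ_three, Matrix.cons_val_zero, Matrix.cons_val_one,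
    Matrix.head_cons] at hE0 hE1
  -- curl components of A as functions
  have hc0 : (fun x => curl A x 0)
      = fun x => pd 1 (fun y => A y 2) x - pd 2 (fun y => A y 1) x := by
    funext x; simp [curl]
  have hc1 : (fun x => curl A x 1)
      = fun x => pd 2 (fun y => A y 0) x - pd 0 (fun y => A y 2) x := by
    funext x; simp [curl]
  have hc2 : (fun x => curl A x 2)
      = fun x => pd 0 (fun y => A y 1) x - pd 1 (fun y => A y 0) x := by
    funext x; simp [curl]
  funext i
  fin_cases i
  · -- component 0
    show pd 1 (fun x => curl A x 2) r - pd 2 (fun x => curl A x 1) r = Jv r 0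
    rw [hc2, hc1, pd_sub _ _ _ _ (hdiff 0 1) (hdiff 1 0),
        pd_sub _ _ _ _ (hdiff 2 0) (hdiff 0 2)]
    have h1 : pd 1 (fun x => pd 0 (fun y => A y 1) x) r
        = -pd 0 (fun x => pd 0 (fun y => A y 0) x) r := by
      rw [pd_comm _ (hAk 1), hg1, pd_neg]
    have h2 : pd 2 (fun x => pd 0 (fun y => A y 2) x) r
        = pd 0 (fun x => pd 2 (fun y => A y 2) x) r := pd_comm _ (hAk 2) 2 0 r
    linarith [hE0]
  · -- component 1
    show pd 2 (fun x => curl A x 0) r - pd 0 (fun x => curl A x 2) r = Jv r 1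
    rw [hc0, hc2, pd_sub _ _ _ _ (hdiff 1 2) (hdiff 2 1),
        pd_sub _ _ _ _ (hdiff 0 1) (hdiff 1 0)]
    have hg0 : (fun x => pd 0 (fun y => A y 0) x)
        = fun x => -pd 1 (fun y => A y 1) x := by
      funext x; linarith [hgauge x]
    have h1 : pd 0 (fun x => pd 1 (fun y => A y 0) x) r
        = -pd 1 (fun x => pd 1 (fun y => A y 1) x) r := by
      rw [pd_comm _ (hAk 0), hg0, pd_neg]
    have h2 : pd 2 (fun x => pd 1 (fun y => A y 2) x) r
        = pd 1 (fun x => pd 2 (fun y => A y 2) x) r := pd_comm _ (hAk 2) 2 1 r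
    linarith [hE1]
  · -- component 2
    show pd 0 (fun x => curl A x 1) r - pd 1 (fun x => curl A x 0) r = Jv r 2
    rw [hc1, hc0, pd_sub _ _ _ _ (hdiff 2 0) (hdiff 0 2),
        pd_sub _ _ _ _ (hdiff 1 2) (hdiff 2 1)]
    have h1 : pd 0 (fun x => pd 2 (fun y => A y 0) x) r
        = pd 2 (fun x => pd 0 (fun y => A y 0) x) r := pd_comm _ (hAk 0) 0 2 r
    have h2 : pd 1 (fun x => pd 2 (fun y => A y 1) x) r
        = -pd 2 (fun x => pd 0 (fun y => A y 0) x) r := by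
      rw [pd_comm _ (hAk 1), hg1, pd_neg]
    have := hpar r
    simp only [lapPerp] at this
    linarith
end
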